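/- Let 𝔐 be a graph-determined variety of rings. Then there exist a positive integer m, an integer d, and a polynomial g ∈ ℤ[x] such that every ring R ∈ 𝔐 satisfies m·x = 0 and d·x + x²·g(x) = 0 for all x ∈ R (where x²·g(x) denotes Σᵢ gᵢ·x^{i+2} with gᵢ the coefficients of g), and either d = 1 or d = q₁q₂⋯q_l is a product of pairwise distinct primes each of which divides m. -/

import Mathlib

/-- An element of a ring is a (one-sided or two-sided) zero-divisor: it is nonzero and
kills some nonzero element on the left or on the right. -/
def IsZD {R : Type*} [NonUnitalNonAssocRing R] (x : R) : Prop :=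
  x ≠ 0 ∧ ∃ y : R, y ≠ 0 ∧ (x * y = 0 ∨ y * x = 0)

/-- The zero-divisor graph `Γ(R)` of a ring `R`: vertices are the nonzero zero-divisors,
and distinct vertices `x`, `y` are adjacent iff `x*y = 0` or `y*x = 0`. -/
def zdvGraph (R : Type*) [NonUnitalNonAssocRing R] :
    SimpleGraph {x : R // IsZD x} where
  Adj a b := a ≠ b ∧ ((a : R) * (b : R) = 0 ∨ (b : R) * (a : R) = 0)
  symm := ⟨by
    rintro a b ⟨hne, h⟩
    exact ⟨hne.symm, h.symm⟩⟩
  loopless := ⟨by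
    rintro a ⟨hne, -⟩
    exact hne rfl⟩

/-- A variety of (associative, not necessarily unital or commutative) rings: a class of
rings closed under isomorphisms, subrings, homomorphic images and arbitrary products. -/
structure RingVariety : Type 1 where
  mem : ∀ (R : Type) [NonUnitalRing R], Prop
  closed_iso : ∀ (R S : Type) [NonUnitalRing R] [NonUnitalRing S],
    (R ≃+* S) → mem R → mem S
  closed_subring : ∀ (R : Type) [NonUnitalRing R] (S : NonUnitalSubring R),
    mem R → mem S
  closed_image : ∀ (R S : Type) [NonUnitalRing R] [NonUnitalRing S] (f : R →ₙ+* S),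
    Function.Surjective f → mem R → mem S
  closed_prod : ∀ (ι : Type) (R : ι → Type) [∀ i, NonUnitalRing (R i)],
    (∀ i, mem (R i)) → mem (∀ i, R i)

/-- A variety is graph-determined if any two finite rings in it with isomorphic
zero-divisor graphs are isomorphic. -/
def GraphDetermined (M : RingVariety) : Prop :=
  ∀ (R S : Type) [NonUnitalRing R] [NonUnitalRing S], Finite R → Finite S →
    M.mem R → M.mem S →
    Nonempty (zdvGraph R ≃g zdvGraph S) → Nonempty (R ≃+* S)

/-- The null ring on an abelian group `A`: all products are zero. -/
def NullRing (A : Type*) := A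

instance {A : Type*} [AddCommGroup A] : NonUnitalRing (NullRing A) :=
  { (inferInstance : AddCommGroup A) with
    mul := fun _ _ => (0 : A)
    left_distrib := fun _ _ _ => (add_zero (0 : A)).symm
    right_distrib := fun _ _ _ => (add_zero (0 : A)).symm
    zero_mul := fun _ => rfl
    mul_zero := fun _ => rfl
    mul_assoc := fun _ _ _ => rfl }

/-- `nupow x n = x^(n+1)`: powers (with positive exponent) in a possibly non-unital
ring. -/
def nupow {R : Type*} [Mul R] (x : R) : ℕ → R
  | 0 => x
  | n + 1 => nupow x n * x


open Polynomial

section EvalMachinery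

variable {R : Type*} [NonUnitalRing R]

lemma nupow_mul_nupow (x : R) (i j : ℕ) : nupow x i * nupow x j = nupow x (i + j + 1) := by
  induction j with
  | zero => rfl
  | succ j ih =>
    have h : i + (j + 1) + 1 = (i + j + 1) + 1 := by omega
    rw [h]
    show nupow x i * (nupow x j * x) = nupow x (i + j + 1) * x
    rw [← mul_assoc, ih]

lemma zsmul_mul_zsmul (a b : ℤ) (x y : R) : (a • x) * (b • y) = (a * b) • (x * y) := by
  rw [smul_mul_assoc, mul_smul_comm, smul_smul]

/-- Evaluation of `f` at `x`, reading `f` as `X·f(X)`: `ev x f = ∑ᵢ fᵢ x^(i+1)`. -/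
noncomputable def ev (x : R) (f : Polynomial ℤ) : R := f.sum fun i a => a • nupow x i

lemma ev_add (x : R) (f g : Polynomial ℤ) : ev x (f + g) = ev x f + ev x g :=
  Polynomial.sum_add_index f g _ (fun _ => zero_smul _ _) (fun _ b c => add_smul b c _)

lemma ev_zero (x : R) : ev x 0 = 0 := Polynomial.sum_zero_index _

lemma ev_neg (x : R) (f : Polynomial ℤ) : ev x (-f) = - ev x f := by
  have h := ev_add x f (-f)
  rw [add_neg_cancel, ev_zero] at h
  exact (neg_eq_of_add_eq_zero_right h.symm).symm

lemma ev_monomial (x : R) (i : ℕ) (a : ℤ) : ev x (monomial i a) = a • nupow x i :=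
  Polynomial.sum_monomial_index a _ (zero_smul _ _)

lemma ev_C (x : R) (c : ℤ) : ev x (C c) = c • x := by
  rw [← Polynomial.monomial_zero_left, ev_monomial]; rfl

lemma ev_mul (x : R) (f g : Polynomial ℤ) : ev x (f * g * X) = ev x f * ev x g := by
  induction f using Polynomial.induction_on' with
  | add p q hp hq => rw [add_mul, add_mul, ev_add, ev_add, hp, hq, add_mul]
  | monomial n a =>
    induction g using Polynomial.induction_on' with
    | add p q hp hq => rw [mul_add, add_mul, ev_add, ev_add, hp, hq, mul_add]
    | monomial m b =>
      rw [monomial_mul_monomial, ← monomial_one_one_eq_X, monomial_mul_monomial,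
        ev_monomial, ev_monomial, ev_monomial, mul_one, zsmul_mul_zsmul, nupow_mul_nupow]

lemma ev_X_mul (x : R) (g : Polynomial ℤ) :
    ev x (X * g) = g.sum fun i a => a • nupow x (i + 1) := by
  induction g using Polynomial.induction_on' with
  | add p q hp hq =>
    rw [mul_add, ev_add, hp, hq,
      Polynomial.sum_add_index p q (fun i a => a • nupow x (i + 1))
        (fun _ => zero_smul _ _) (fun _ b c => add_smul b c _)]
  | monomial n a =>
    rw [← monomial_one_one_eq_X, monomial_mul_monomial, ev_monomial, one_mul,
      Polynomial.sum_monomial_index (n := n) a (fun i a => a • nupow x (i + 1))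
        (zero_smul _ _), add_comm]

lemma ev_decomp (x : R) (f : Polynomial ℤ) :
    ev x f = f.coeff 0 • x + f.divX.sum (fun i a => a • nupow x (i + 1)) := by
  conv_lhs => rw [← Polynomial.X_mul_divX_add f]
  rw [ev_add, ev_X_mul, ev_C, add_comm]

lemma nupow_apply {ι : Type*} {S : ι → Type*} [∀ i, Mul (S i)] (x : ∀ i, S i) (n : ℕ)
    (w : ι) : nupow x n w = nupow (x w) n := by
  induction n with
  | zero => rfl
  | succ n ih =>
    show (nupow x n * x) w = nupow (x w) n * x w
    rw [Pi.mul_apply, ih]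

lemma ev_apply {ι : Type*} {S : ι → Type*} [∀ i, NonUnitalRing (S i)] (x : ∀ i, S i)
    (f : Polynomial ℤ) (w : ι) : ev x f w = ev (x w) f := by
  unfold ev Polynomial.sum
  rw [Finset.sum_apply]
  refine Finset.sum_congr rfl fun i _ => ?_
  simp only [Pi.smul_apply, nupow_apply]

lemma poly_sum_neg (g : Polynomial ℤ) (v : ℕ → R) :
    (-g).sum (fun i a => a • v i) = - g.sum (fun i a => a • v i) := by
  have h := Polynomial.sum_add_index g (-g) (fun i a => a • v i)
    (fun _ => zero_smul _ _) (fun _ b c => add_smul b c _)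
  rw [add_neg_cancel, Polynomial.sum_zero_index] at h
  exact (neg_eq_of_add_eq_zero_right h.symm).symm

end EvalMachinery

section FreeConstruction

variable (M : RingVariety)

/-- `f` is a one-variable identity of the variety `M` (reading `f` as `X·f(X)`). -/
def Idl (f : Polynomial ℤ) : Prop :=
  ∀ (R : Type) (inst : NonUnitalRing R), M.mem R → ∀ x : R, ev x f = 0

/-- Non-identities, used as indexing set for witness rings. -/
def Wit : Type := {f : Polynomial ℤ // ¬ Idl M f}

/-- Data of a witness for a non-identity. -/
def WitnessTy (f : Polynomial ℤ) : Type 1 :=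
  (R : Type) ×' (inst : NonUnitalRing R) ×' (x : R) ×' (M.mem R ∧ ev x f ≠ 0)

lemma witness_nonempty (w : Wit M) : Nonempty (WitnessTy M w.1) := by
  have h := w.2
  unfold Idl at h
  push_neg at h
  obtain ⟨R, inst, hm, x, hx⟩ := h
  exact ⟨⟨R, inst, x, hm, hx⟩⟩

noncomputable def witD (w : Wit M) : WitnessTy M w.1 := Classical.choice (witness_nonempty M w)

/-- The witness ring indexed by a non-identity. -/
noncomputable def wR (w : Wit M) : Type := (witD M w).1

noncomputable instance (w : Wit M) : NonUnitalRing (wR M w) := (witD M w).2.1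

/-- The generic element of the product of all witness rings. -/
noncomputable def xi : ∀ w : Wit M, wR M w := fun w => (witD M w).2.2.1

lemma mem_wR (w : Wit M) : M.mem (wR M w) := (witD M w).2.2.2.1

lemma mem_P : M.mem (∀ w : Wit M, wR M w) := M.closed_prod _ _ (mem_wR M)

lemma ev_xi_eq_zero_iff (f : Polynomial ℤ) : ev (xi M) f = 0 ↔ Idl M f := by
  constructor
  · intro h
    by_contra hni
    have h2 := congrFun h ⟨f, hni⟩
    replace h2 := (ev_apply (xi M) f ⟨f, hni⟩).symm.trans h2
    exact (witD M ⟨f, hni⟩).2.2.2.2 h2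
  · intro h
    exact h _ _ (mem_P M) _

/-- The relatively free one-generated `M`-ring: the range of evaluation at the generic
element. -/
noncomputable def rangeSub : NonUnitalSubring (∀ w : Wit M, wR M w) where
  carrier := Set.range (ev (xi M))
  zero_mem' := ⟨0, ev_zero _⟩
  add_mem' := by rintro _ _ ⟨f, rfl⟩ ⟨g, rfl⟩; exact ⟨f + g, ev_add _ _ _⟩
  neg_mem' := by rintro _ ⟨f, rfl⟩; exact ⟨-f, ev_neg _ _⟩
  mul_mem' := by rintro _ _ ⟨f, rfl⟩ ⟨g, rfl⟩; exact ⟨f * g * Polynomial.X, ev_mul _ _ _⟩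

lemma mem_rangeSub : M.mem (rangeSub M) := M.closed_subring _ (rangeSub M) (mem_P M)

instance {A : Type*} [Fintype A] : Fintype (NullRing A) := inferInstanceAs (Fintype A)
instance {A : Type*} [Finite A] : Finite (NullRing A) := inferInstanceAs (Finite A)
instance {A : Type*} [DecidableEq A] : DecidableEq (NullRing A) :=
  inferInstanceAs (DecidableEq A)

/-- If every one-variable identity of `M` has linear coefficient divisible by `N`,
then the null ring on `ℤ/N` belongs to `M`. -/
lemma null_mem (N : ℕ) (hker : ∀ f, Idl M f → ((f.coeff 0 : ℤ) : ZMod N) = 0) :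
    M.mem (NullRing (ZMod N)) := by
  classical
  have key : ∀ f g : Polynomial ℤ, ev (xi M) f = ev (xi M) g →
      ((f.coeff 0 : ℤ) : ZMod N) = ((g.coeff 0 : ℤ) : ZMod N) := by
    intro f g h
    have h0 : ev (xi M) (f - g) = 0 := by
      rw [sub_eq_add_neg, ev_add, ev_neg, h, add_neg_cancel]
    have h1 := hker _ ((ev_xi_eq_zero_iff M _).mp h0)
    rw [Polynomial.coeff_sub] at h1
    push_cast at h1
    exact sub_eq_zero.mp h1
  let ψ : rangeSub M → NullRing (ZMod N) := fun s =>
    (((Classical.choose (s.2 : ∃ f, ev (xi M) f = (s : ∀ w : Wit M, wR M w))).coeff 0 : ℤ) :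
      ZMod N)
  have spec : ∀ (s : rangeSub M) (f : Polynomial ℤ),
      (s : ∀ w : Wit M, wR M w) = ev (xi M) f → ψ s = ((f.coeff 0 : ℤ) : ZMod N) := by
    intro s f h
    have hc := Classical.choose_spec (s.2 : ∃ f, ev (xi M) f = (s : ∀ w : Wit M, wR M w))
    exact key _ _ (hc.trans h)
  have coe_add : ∀ s t : rangeSub M,
      ((s + t : rangeSub M) : ∀ w : Wit M, wR M w) = (s : ∀ w : Wit M, wR M w) + t := by
    intro s t; rfl
  have coe_mul : ∀ s t : rangeSub M,
      ((s * t : rangeSub M) : ∀ w : Wit M, wR M w) = (s : ∀ w : Wit M, wR M w) * t := by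
    intro s t; rfl
  let Ψ : rangeSub M →ₙ+* NullRing (ZMod N) :=
  { toFun := ψ
    map_zero' := by
      show ψ 0 = 0
      rw [spec 0 0 (by rw [ev_zero]; rfl)]
      simp
      rfl
    map_add' := by
      intro s t
      show ψ (s + t) = ψ s + ψ t
      obtain ⟨f, hf⟩ := (s.2 : ∃ f, ev (xi M) f = (s : ∀ w : Wit M, wR M w))
      obtain ⟨g, hg⟩ := (t.2 : ∃ f, ev (xi M) f = (t : ∀ w : Wit M, wR M w))
      rw [spec s f hf.symm, spec t g hg.symm,
        spec (s + t) (f + g) (by rw [coe_add, ev_add, hf, hg])]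
      show (((f + g).coeff 0 : ℤ) : ZMod N) = ((f.coeff 0 : ℤ) : ZMod N) + ((g.coeff 0 : ℤ) : ZMod N)
      rw [Polynomial.coeff_add]
      push_cast
      ring
    map_mul' := by
      intro s t
      show ψ (s * t) = ψ s * ψ t
      obtain ⟨f, hf⟩ := (s.2 : ∃ f, ev (xi M) f = (s : ∀ w : Wit M, wR M w))
      obtain ⟨g, hg⟩ := (t.2 : ∃ f, ev (xi M) f = (t : ∀ w : Wit M, wR M w))
      rw [spec (s * t) (f * g * Polynomial.X) (by rw [coe_mul, ev_mul, hf, hg])]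
      have hnull : ψ s * ψ t = 0 := rfl
      rw [hnull]
      show (((f * g * Polynomial.X).coeff 0 : ℤ) : ZMod N) = 0
      rw [Polynomial.mul_coeff_zero, Polynomial.coeff_X_zero, mul_zero]
      push_cast
      ring }
  have hsurj : Function.Surjective Ψ := by
    intro y
    obtain ⟨z, hz⟩ := ZMod.intCast_surjective (n := N) (show ZMod N from y)
    refine ⟨⟨ev (xi M) (Polynomial.C z), ⟨Polynomial.C z, rfl⟩⟩, ?_⟩
    show ψ ⟨ev (xi M) (Polynomial.C z), ⟨Polynomial.C z, rfl⟩⟩ = y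
    rw [spec _ (Polynomial.C z) rfl, Polynomial.coeff_C_zero]
    exact hz
  exact M.closed_image _ _ Ψ hsurj (mem_rangeSub M)
end FreeConstruction

section NullGraphs

/-- Zero-divisor graphs of null rings of the same cardinality are isomorphic. -/
noncomputable def null_graph_iso {A B : Type} [NonUnitalRing A] [NonUnitalRing B]
    (hA : ∀ a b : A, a * b = 0) (hB : ∀ a b : B, a * b = 0) (e : A ≃ B) (he : e 0 = 0) :
    zdvGraph A ≃g zdvGraph B := by
  have hZA : ∀ x : A, IsZD x ↔ x ≠ 0 :=
    fun x => ⟨fun h => h.1, fun h => ⟨h, x, h, Or.inl (hA x x)⟩⟩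
  have hZB : ∀ x : B, IsZD x ↔ x ≠ 0 :=
    fun x => ⟨fun h => h.1, fun h => ⟨h, x, h, Or.inl (hB x x)⟩⟩
  have he' : ∀ x : A, x = 0 ↔ e x = 0 := fun x =>
    ⟨fun h => h ▸ he, fun h => e.injective (h.trans he.symm)⟩
  refine ⟨Equiv.subtypeEquiv e fun x => by rw [hZA, hZB, not_iff_not]; exact he' x, ?_⟩
  intro u v
  show ((_ : {x : B // IsZD x}) ≠ _ ∧ _) ↔ ((u : {x : A // IsZD x}) ≠ v ∧ _)
  constructor
  · rintro ⟨hne, -⟩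
    exact ⟨fun hh => hne (by rw [hh]), Or.inl (hA _ _)⟩
  · rintro ⟨hne, -⟩
    refine ⟨fun hh => hne ?_, Or.inl (hB _ _)⟩
    exact (Equiv.subtypeEquiv e fun x => by
      rw [hZA, hZB, not_iff_not]; exact he' x).injective hh

/-- The key contradiction: a graph-determined variety cannot contain both the null ring
on `ℤ/p²` and the null ring on `(ℤ/p)²`. -/
lemma prime_sq_contradiction (M : RingVariety) (hgd : GraphDetermined M) (p : ℕ)
    (hp : p.Prime) (h2 : M.mem (NullRing (ZMod (p ^ 2))))
    (h1 : M.mem (Bool → NullRing (ZMod p))) : False := by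
  classical
  haveI : Fact p.Prime := ⟨hp⟩
  haveI : NeZero (p ^ 2) := ⟨pow_ne_zero _ hp.ne_zero⟩
  haveI : NeZero p := ⟨hp.ne_zero⟩
  set A := NullRing (ZMod (p ^ 2)) with hAdef
  set B := Bool → NullRing (ZMod p) with hBdef
  letI : Fintype A := (inferInstance : Fintype (ZMod (p ^ 2)))
  letI : Fintype B := inferInstanceAs (Fintype (Bool → NullRing (ZMod p)))
  have hA : ∀ a b : A, a * b = 0 := fun _ _ => rfl
  have hB : ∀ a b : B, a * b = 0 := fun _ _ => funext fun _ => rfl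
  have hcard : Fintype.card A = Fintype.card B := by
    have c1 : Fintype.card A = p ^ 2 := ZMod.card (p ^ 2)
    have c2 : Fintype.card B = p ^ 2 := by
      rw [show Fintype.card B = Fintype.card (Bool → NullRing (ZMod p)) from rfl,
        Fintype.card_fun, show Fintype.card (NullRing (ZMod p)) = Fintype.card (ZMod p)
          from rfl, ZMod.card, Fintype.card_bool, sq]
    rw [c1, c2]
  letI : DecidableEq A := (inferInstance : DecidableEq (ZMod (p ^ 2)))
  let e0 : A ≃ B := Fintype.equivOfCardEq hcard
  let e1 : A ≃ B := e0.setValue 0 0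
  have he1 : e1 0 = 0 := Equiv.setValue_eq e0 0 0
  obtain ⟨riso⟩ := hgd A B (Finite.of_fintype A) (Finite.of_fintype B) h2 h1
    ⟨null_graph_iso hA hB e1 he1⟩
  -- additive-order contradiction
  let u : A := (1 : ZMod (p ^ 2))
  have torsion : ∀ y : ZMod p, p • y = 0 := fun y => by
    rw [nsmul_eq_mul, ZMod.natCast_self, zero_mul]
  have hpu : p • riso u = 0 := by
    funext w
    exact torsion ((riso u) w)
  have hzero : p • u = 0 := riso.injective (by rw [map_nsmul, hpu, map_zero])
  have hz : (p : ℕ) • (1 : ZMod (p ^ 2)) = 0 := hzero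
  rw [nsmul_eq_mul, mul_one] at hz
  have hdvd : p ^ 2 ∣ p := (ZMod.natCast_eq_zero_iff p (p ^ 2)).mp hz
  have hle : p ^ 2 ≤ p := Nat.le_of_dvd hp.pos hdvd
  nlinarith [hp.two_le]

end NullGraphs

section Vandermonde

lemma nupow_zero {R : Type*} [Mul R] (x : R) : nupow x 0 = x := rfl

lemma nupow_zsmul {R : Type*} [NonUnitalRing R] (z : ℤ) (x : R) (k : ℕ) :
    nupow (z • x) k = z ^ (k + 1) • nupow x k := by
  induction k with
  | zero => show z • x = z ^ 1 • x; rw [pow_one]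
  | succ k ih =>
    show nupow (z • x) k * (z • x) = z ^ (k + 2) • (nupow x k * x)
    rw [ih, zsmul_mul_zsmul, ← pow_succ]

/-- The (shifted) Vandermonde-type matrix `(n+1)^(k+1)`. -/
def vdm (K : ℕ) : Matrix (Fin K) (Fin K) ℤ :=
  Matrix.of fun k n => ((n : ℤ) + 1) ^ ((k : ℕ) + 1)

lemma vdm_det_ne_zero (K : ℕ) : (vdm K).det ≠ 0 := by
  have hv : vdm K = (Matrix.vandermonde (fun n : Fin K => (n : ℤ) + 1)).transpose
      * Matrix.diagonal (fun n : Fin K => (n : ℤ) + 1) := by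
    ext k n
    rw [Matrix.mul_diagonal, Matrix.transpose_apply, Matrix.vandermonde_apply]
    show ((n : ℤ) + 1) ^ ((k : ℕ) + 1) = ((n : ℤ) + 1) ^ (k : ℕ) * ((n : ℤ) + 1)
    rw [← pow_succ]
  rw [hv, Matrix.det_mul, Matrix.det_transpose, Matrix.det_vandermonde, Matrix.det_diagonal]
  apply mul_ne_zero
  · rw [Finset.prod_ne_zero_iff]
    intro i _
    rw [Finset.prod_ne_zero_iff]
    intro j hj
    have hij0 : i < j := Finset.mem_Ioi.mp hj
    have hij : (i : ℕ) < (j : ℕ) := hij0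
    have h2 : ((i : ℕ) : ℤ) < ((j : ℕ) : ℤ) := by exact_mod_cast hij
    intro hzero
    have : ((j : ℕ) : ℤ) + 1 = ((i : ℕ) : ℤ) + 1 := by linarith [sub_eq_zero.mp hzero]
    omega
  · rw [Finset.prod_ne_zero_iff]
    intro i _
    positivity

lemma torsion_of_identity {R : Type*} [NonUnitalRing R] (d0 : ℤ) (g : Polynomial ℤ)
    (hgx : ∀ x : R, d0 • x + g.sum (fun i a => a • nupow x (i + 1)) = 0) (x : R) :
    (d0 * (vdm (g.natDegree + 2)).det) • x = 0 := by
  classical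
  set K := g.natDegree + 2 with hK
  haveI : NeZero K := ⟨by omega⟩
  set b : ℕ → ℤ := fun k => if k = 0 then d0 else g.coeff (k - 1) with hb
  have rel : ∀ z : ℤ, ∑ k ∈ Finset.range K, (b k * z ^ (k + 1)) • nupow x k = 0 := by
    intro z
    have h := hgx (z • x)
    rw [Polynomial.sum_over_range' g (f := fun i a => a • nupow (z • x) (i + 1))
      (fun _ => zero_smul _ _) (g.natDegree + 1) (Nat.lt_succ_self _)] at h
    have h3 : (d0 * z) • x + ∑ i ∈ Finset.range (g.natDegree + 1),
        (g.coeff i * z ^ (i + 1 + 1)) • nupow x (i + 1) = 0 := by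
      rw [← h]
      congr 1
      · rw [← smul_smul]
      · refine Finset.sum_congr rfl fun i _ => ?_
        rw [nupow_zsmul, smul_smul]
    rw [hK, Finset.sum_range_succ' (fun k => (b k * z ^ (k + 1)) • nupow x k)
      (g.natDegree + 1)]
    simp only [hb, Nat.succ_ne_zero, if_false, Nat.add_sub_cancel, if_pos rfl,
      zero_add, pow_one, nupow_zero]
    rw [add_comm]
    exact h3
  have relFin : ∀ n : Fin K,
      ∑ k : Fin K, (b k * ((n : ℤ) + 1) ^ ((k : ℕ) + 1)) • nupow x (k : ℕ) = 0 := by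
    intro n
    rw [Fin.sum_univ_eq_sum_range (fun k => (b k * ((n : ℤ) + 1) ^ (k + 1)) • nupow x k) K]
    exact rel ((n : ℤ) + 1)
  set c : Fin K → ℤ := (vdm K).adjugate.mulVec (Pi.single 0 1) with hc
  have hAc : (vdm K).mulVec c = (vdm K).det • Pi.single 0 1 := by
    rw [hc, Matrix.mulVec_mulVec, Matrix.mul_adjugate, Matrix.smul_mulVec,
      Matrix.one_mulVec]
  have step1 : ∑ n : Fin K,
      c n • (∑ k : Fin K, (b k * ((n : ℤ) + 1) ^ ((k : ℕ) + 1)) • nupow x (k : ℕ)) = 0 := by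
    refine Finset.sum_eq_zero fun n _ => ?_
    rw [relFin n, smul_zero]
  have step2 : ∑ n : Fin K,
      c n • (∑ k : Fin K, (b k * ((n : ℤ) + 1) ^ ((k : ℕ) + 1)) • nupow x (k : ℕ))
      = ∑ k : Fin K, (b k * ((vdm K).mulVec c k)) • nupow x (k : ℕ) := by
    calc ∑ n : Fin K, c n • (∑ k : Fin K,
            (b k * ((n : ℤ) + 1) ^ ((k : ℕ) + 1)) • nupow x (k : ℕ))
        = ∑ n : Fin K, ∑ k : Fin K,
            (c n * (b k * ((n : ℤ) + 1) ^ ((k : ℕ) + 1))) • nupow x (k : ℕ) := by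
          refine Finset.sum_congr rfl fun n _ => ?_
          rw [Finset.smul_sum]
          exact Finset.sum_congr rfl fun k _ => by rw [smul_smul]
      _ = ∑ k : Fin K, ∑ n : Fin K,
            (c n * (b k * ((n : ℤ) + 1) ^ ((k : ℕ) + 1))) • nupow x (k : ℕ) :=
          Finset.sum_comm
      _ = ∑ k : Fin K, (b k * ((vdm K).mulVec c k)) • nupow x (k : ℕ) := by
          refine Finset.sum_congr rfl fun k _ => ?_
          rw [← Finset.sum_smul]
          congr 1
          rw [Matrix.mulVec, dotProduct, Finset.mul_sum]
          refine Finset.sum_congr rfl fun n _ => ?_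
          show c n * (b k * ((n : ℤ) + 1) ^ ((k : ℕ) + 1))
            = b k * (vdm K k n * c n)
          rw [show vdm K k n = ((n : ℤ) + 1) ^ ((k : ℕ) + 1) from rfl]
          ring
  have step3 : ∑ k : Fin K, (b k * ((vdm K).mulVec c k)) • nupow x (k : ℕ)
      = (d0 * (vdm K).det) • x := by
    rw [hAc]
    have hterm : ∀ k : Fin K,
        (b (k : ℕ) * ((((vdm K).det • Pi.single (0 : Fin K) (1 : ℤ)) : Fin K → ℤ) k))
          • nupow x (k : ℕ)
        = if k = (0 : Fin K) then (d0 * (vdm K).det) • x else 0 := by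
      intro k
      rcases eq_or_ne k (0 : Fin K) with rfl | hk
      · rw [if_pos rfl, Pi.smul_apply, Pi.single_eq_same]
        show (b 0 * ((vdm K).det * 1)) • nupow x 0 = (d0 * (vdm K).det) • x
        rw [hb, mul_one, nupow_zero]
        simp
      · rw [if_neg hk, Pi.smul_apply, Pi.single_eq_of_ne hk]
        show (b (k : ℕ) * ((vdm K).det * 0)) • nupow x (k : ℕ) = 0
        rw [mul_zero, mul_zero, zero_smul]
    rw [Finset.sum_congr rfl fun k _ => hterm k, Finset.sum_ite_eq' Finset.univ (0 : Fin K)]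
    simp
  exact step3.symm.trans (step2.symm.trans step1)

end Vandermonde

section GsubSection

variable (M : RingVariety)

/-- The subgroup of `ℤ` of coefficients `c` such that `c·x + x²g(x) = 0` is an identity
of `M` for some `g`. -/
def Gsub : AddSubgroup ℤ where
  carrier := {c : ℤ | ∃ g : Polynomial ℤ, ∀ (R : Type) (inst : NonUnitalRing R),
    M.mem R → ∀ x : R, c • x + g.sum (fun i a => a • nupow x (i + 1)) = 0}
  zero_mem' := ⟨0, fun R inst hm x => by
    rw [Polynomial.sum_zero_index, zero_smul, add_zero]⟩
  add_mem' := by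
    rintro c1 c2 ⟨g1, h1⟩ ⟨g2, h2⟩
    refine ⟨g1 + g2, fun R inst hm x => ?_⟩
    rw [Polynomial.sum_add_index g1 g2 (fun i a => a • nupow x (i + 1))
      (fun _ => zero_smul _ _) (fun _ u v => add_smul u v _), add_smul, add_add_add_comm,
      h1 R inst hm x, h2 R inst hm x, add_zero]
  neg_mem' := by
    rintro c ⟨g, h⟩
    refine ⟨-g, fun R inst hm x => ?_⟩
    rw [poly_sum_neg, neg_smul, ← neg_add, h R inst hm x, neg_zero]

lemma coeff_mem_Gsub (f : Polynomial ℤ) (h : Idl M f) : f.coeff 0 ∈ Gsub M :=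
  ⟨f.divX, fun R inst hm x => by rw [← ev_decomp]; exact h R inst hm x⟩

end GsubSection


/-- If `𝔐` is a graph-determined variety, then `𝔐` satisfies identities `m·x = 0` and
`d·x + x²·g(x) = 0` where `m > 0`, `g ∈ ℤ[x]` (here `x²·g(x) = Σᵢ gᵢ·x^(i+2)`, and
`nupow x (i+1) = x^(i+2)`), and either `d = 1` or `d` is a product of pairwise distinct
primes each dividing `m`. -/
theorem graphDetermined_identities (M : RingVariety) (hgd : GraphDetermined M) :
    ∃ m : ℕ, 0 < m ∧ ∃ (d : ℤ) (g : Polynomial ℤ),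
      (∀ (R : Type) [inst : NonUnitalRing R], M.mem R → ∀ x : R,
        m • x = 0 ∧ d • x + g.sum (fun i a => a • nupow x (i + 1)) = 0) ∧
      (d = 1 ∨ ∃ qs : Finset ℕ, qs.Nonempty ∧ (∀ q ∈ qs, q.Prime ∧ q ∣ m) ∧
        d = ∏ q ∈ qs, (q : ℤ)) := by
  classical
  obtain ⟨a, ha⟩ := Int.subgroup_cyclic (Gsub M)
  set d0 : ℕ := a.natAbs with hd0
  have haG : a ∈ Gsub M := by
    rw [ha]; exact AddSubgroup.mem_closure_singleton.mpr ⟨1, one_smul _ _⟩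
  have hd0G : ((d0 : ℤ)) ∈ Gsub M := by
    rcases Int.natAbs_eq a with h | h
    · rw [hd0, ← h]; exact haG
    · have h2 := (Gsub M).neg_mem haG
      rw [show -a = (d0 : ℤ) by omega] at h2
      exact h2
  have hdvd : ∀ c ∈ Gsub M, (d0 : ℤ) ∣ c := by
    intro c hc
    rw [ha, AddSubgroup.mem_closure_singleton] at hc
    obtain ⟨n, rfl⟩ := hc
    exact Int.natAbs_dvd.mpr ⟨n, by rw [smul_eq_mul, mul_comm]⟩
  -- squarefreeness of d0 (and d0 ≠ 0) via graph-determinedness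
  have hp2 : ∀ p : ℕ, p.Prime → ¬ (p * p ∣ d0) := by
    intro p hp hpd
    have hdp2 : ((p ^ 2 : ℕ) : ℤ) ∣ (d0 : ℤ) := by
      exact_mod_cast Int.natCast_dvd_natCast.mpr (by rwa [← sq] at hpd)
    have hdp1 : ((p : ℕ) : ℤ) ∣ (d0 : ℤ) :=
      dvd_trans (by exact_mod_cast Int.natCast_dvd_natCast.mpr (dvd_pow_self p two_ne_zero))
        hdp2
    have hk2 : ∀ f, Idl M f → ((f.coeff 0 : ℤ) : ZMod (p ^ 2)) = 0 := by
      intro f hf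
      rw [ZMod.intCast_zmod_eq_zero_iff_dvd]
      exact dvd_trans hdp2 (hdvd _ (coeff_mem_Gsub M f hf))
    have hk1 : ∀ f, Idl M f → ((f.coeff 0 : ℤ) : ZMod p) = 0 := by
      intro f hf
      rw [ZMod.intCast_zmod_eq_zero_iff_dvd]
      exact dvd_trans hdp1 (hdvd _ (coeff_mem_Gsub M f hf))
    exact prime_sq_contradiction M hgd p hp (null_mem M (p ^ 2) hk2)
      (M.closed_prod Bool (fun _ => NullRing (ZMod p)) (fun _ => null_mem M p hk1))
  have hd0_ne : d0 ≠ 0 := fun h => hp2 2 Nat.prime_two (by rw [h]; exact dvd_zero _)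
  have hsq : Squarefree d0 := Nat.squarefree_iff_prime_squarefree.mpr hp2
  obtain ⟨g, hg⟩ := hd0G
  set D : ℤ := (vdm (g.natDegree + 2)).det with hD
  have hDne : D ≠ 0 := vdm_det_ne_zero _
  set mz : ℤ := (d0 : ℤ) * D with hmz
  have hmzx : ∀ (R : Type) (inst : NonUnitalRing R), M.mem R → ∀ x : R, mz • x = 0 := by
    intro R inst hm x
    exact torsion_of_identity (d0 : ℤ) g (hg R inst hm) x
  have hd0m : d0 ∣ mz.natAbs := by
    have h1 : (d0 : ℤ) ∣ mz := Dvd.intro D rfl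
    have := Int.natAbs_dvd_natAbs.mpr h1
    rwa [Int.natAbs_natCast] at this
  refine ⟨mz.natAbs, Int.natAbs_pos.mpr
    (mul_ne_zero (by exact_mod_cast hd0_ne) hDne), (d0 : ℤ), g, ?_, ?_⟩
  · intro R inst hm x
    refine ⟨?_, hg R inst hm x⟩
    have h1 : mz • x = 0 := hmzx R inst hm x
    have h2 : ((mz.natAbs : ℤ)) • x = 0 := by
      rcases Int.natAbs_eq mz with h | h
      · rw [← h]; exact h1
      · rw [show ((mz.natAbs : ℤ)) = -mz by omega, neg_smul, h1, neg_zero]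
    rw [← natCast_zsmul x mz.natAbs]
    exact h2
  · by_cases h1 : d0 = 1
    · left; rw [h1]; norm_num
    · right
      refine ⟨d0.primeFactors, Nat.nonempty_primeFactors.mpr (by omega), ?_, ?_⟩
      · intro q hq
        exact ⟨Nat.prime_of_mem_primeFactors hq,
          dvd_trans (Nat.dvd_of_mem_primeFactors hq) hd0m⟩
      · rw [show ((d0 : ℤ)) = ((∏ q ∈ d0.primeFactors, q : ℕ) : ℤ) by
          rw [Nat.prod_primeFactors_of_squarefree hsq], Nat.cast_prod]
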